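/- There exist a symmetric positive definite real 2×2 matrix P0 satisfying the Lyapunov equation A0ᵀ P0 + P0 A0 = −I, and a constant λ̄ ∈ (0,1), such that for every λ ∈ [0, λ̄] the matrix inequality A_λᵀ P0 + P0 A_λ ≼ −(1/2) I holds, i.e. xᵀ(A_λᵀ P0 + P0 A_λ)x ≤ −(1/2)|x|² for all x ∈ ℝ². -/

import Mathlib

open Set Matrix

/-- The matrix `A0`. -/
noncomputable def A0 : Matrix (Fin 2) (Fin 2) ℝ := !![-0.1, 0.5; -2, 0]

/-- The matrix `A1`. -/
noncomputable def A1 : Matrix (Fin 2) (Fin 2) ℝ := !![0, 2; -0.5, -0.1]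

/-- The saturation function `φ`. -/
noncomputable def phi (s : ℝ) : ℝ := if s < 0 then 0 else if s ≤ 1 then s else 1

/-- `ℝ²` with the Euclidean norm. -/
abbrev E2 : Type := EuclideanSpace ℝ (Fin 2)

/-- Action of a `2 × 2` matrix on `ℝ²`. -/
noncomputable def act (A : Matrix (Fin 2) (Fin 2) ℝ) (x : E2) : E2 :=
  Matrix.toEuclideanLin A x

/-- The nonlinearity `g(x,u) = (1+|x|²)(φ(u) A1 + (1-φ(u)) A0) x`. -/
noncomputable def gfun (x : E2) (u : ℝ) : E2 :=
  (1 + ‖x‖ ^ 2) • act (phi u • A1 + (1 - phi u) • A0) x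

/-- `X = (x, z1, z2) : [-2,∞) → ℝ² × ℝ × ℝ` is a solution of the time-delay system `(S_c)`. -/
def IsSolution (c : ℝ) (x : ℝ → E2) (z1 z2 : ℝ → ℝ) : Prop :=
  ContinuousOn x (Ici (-2 : ℝ)) ∧ ContinuousOn z1 (Ici (-2 : ℝ)) ∧
  ContinuousOn z2 (Ici (-2 : ℝ)) ∧
  ∀ t : ℝ, 0 < t →
    HasDerivAt x ((c * phi (z2 (t - 2))) • gfun (x t) (z1 (t - 1))
      + (c * (1 - phi (z2 (t - 2)))) • act A0 (x t)) t
    ∧ HasDerivAt z1 (-(z1 t)) t ∧ HasDerivAt z2 (-(z2 t)) t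

/-- Euclidean norm `|X(t)|` of the full state `(x(t), z1(t), z2(t)) ∈ ℝ⁴`. -/
noncomputable def Xnorm (x : ℝ → E2) (z1 z2 : ℝ → ℝ) (t : ℝ) : ℝ :=
  Real.sqrt (‖x t‖ ^ 2 + (z1 t) ^ 2 + (z2 t) ^ 2)

/-- Norm `‖X0‖ = sup_{τ ∈ [-2,0]} |X(τ)|` of the initial segment of a solution. -/
noncomputable def initNorm (x : ℝ → E2) (z1 z2 : ℝ → ℝ) : ℝ :=
  sSup (Xnorm x z1 z2 '' Icc (-2 : ℝ) 0)

/-- Convex combination `A_λ = λ A1 + (1-λ) A0`. -/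
noncomputable def Amat (l : ℝ) : Matrix (Fin 2) (Fin 2) ℝ := l • A1 + (1 - l) • A0

/-- There is a symmetric positive definite `P0` with `A0ᵀ P0 + P0 A0 = -I` and `λ̄ ∈ (0,1)`
such that `A_λᵀ P0 + P0 A_λ ≼ -(1/2) I` for all `λ ∈ [0, λ̄]`. -/
theorem stmt_5 :
    ∃ P0 : Matrix (Fin 2) (Fin 2) ℝ, P0.IsSymm ∧ P0.PosDef ∧
      A0ᵀ * P0 + P0 * A0 = -(1 : Matrix (Fin 2) (Fin 2) ℝ) ∧
      ∃ lbar : ℝ, lbar ∈ Ioo (0 : ℝ) 1 ∧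
        ∀ l ∈ Icc (0 : ℝ) lbar, ∀ v : Fin 2 → ℝ,
          v ⬝ᵥ ((Amat l)ᵀ * P0 + P0 * Amat l).mulVec v ≤ -(1 / 2) * (v ⬝ᵥ v) := by
  refine ⟨!![25, -1; -1, 6.3], ?_, ?_, ?_, 1/100, ⟨by norm_num, by norm_num⟩, ?_⟩
  · ext i j; fin_cases i <;> fin_cases j <;> simp [Matrix.IsSymm]
  · rw [posDef_iff_dotProduct_mulVec]
    constructor
    · ext i j; fin_cases i <;> fin_cases j <;> simp [Matrix.IsHermitian]
    · intro x hx
      have h : x 0 ≠ 0 ∨ x 1 ≠ 0 := by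
        by_contra h
        push_neg at h
        exact hx (funext fun i => by fin_cases i <;> simp [h.1, h.2])
      simp only [Matrix.mulVec, dotProduct, Fin.sum_univ_two, Matrix.cons_val',
        Matrix.cons_val_zero, Matrix.cons_val_one, Matrix.head_cons, Matrix.empty_val',
        Matrix.cons_val_fin_one, Matrix.head_fin_const, RCLike.star_def, starRingEnd_apply,
        star_trivial, Matrix.vecHead, Matrix.vecTail]
      norm_num
      rcases h with h | h
      · nlinarith [sq_nonneg (5 * x 0 - x 1), sq_nonneg (x 0), sq_nonneg (x 1), mul_self_pos.mpr h]
      · nlinarith [sq_nonneg (5 * x 0 - x 1), sq_nonneg (x 0), sq_nonneg (x 1), mul_self_pos.mpr h]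
  · ext i j
    fin_cases i <;> fin_cases j <;>
      norm_num [A0, Matrix.mul_apply, Fin.sum_univ_two, Matrix.transpose_apply,
        Matrix.vecHead, Matrix.vecTail]
  · intro l hl v
    obtain ⟨hl0, hl1⟩ := hl
    simp only [Amat, A0, A1, Matrix.mulVec, dotProduct, Fin.sum_univ_two,
      Matrix.mul_apply, Matrix.transpose_apply, Matrix.add_apply, Matrix.smul_apply,
      Matrix.cons_val', Matrix.cons_val_zero, Matrix.cons_val_one, Matrix.head_cons,
      Matrix.empty_val', Matrix.cons_val_fin_one, smul_eq_mul, Matrix.vecHead, Matrix.vecTail]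
    norm_num
    nlinarith [sq_nonneg (v 0 - v 1), sq_nonneg (v 0 + v 1), sq_nonneg (v 0), sq_nonneg (v 1),
      mul_nonneg hl0 (sq_nonneg (v 0)), mul_nonneg hl0 (sq_nonneg (v 1)),
      mul_nonneg hl0 (sq_nonneg (v 0 - v 1)), mul_nonneg hl0 (sq_nonneg (v 0 + v 1)),
      mul_nonneg (sub_nonneg.2 hl1) (sq_nonneg (v 0)), mul_nonneg (sub_nonneg.2 hl1) (sq_nonneg (v 1)),
      mul_nonneg (sub_nonneg.2 hl1) (sq_nonneg (v 0 - v 1)),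
      mul_nonneg (sub_nonneg.2 hl1) (sq_nonneg (v 0 + v 1))]
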